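/- Let $E:\mathcal{E}\to\mathcal{E}$ be a linear map with $E^2=\mathrm{Id}$ on a Leibniz algebra $(\mathcal{E},[\cdot,\cdot])$ satisfying $[x,y]=-[Ex,Ey]$ for all $x,y$. Then $E$ is a product structure, i.e. $E[x,y]=[Ex,y]+[x,Ey]-E[Ex,Ey]$ holds. Moreover, such an abelian product structure exists if and only if $\mathcal{E}=\mathcal{E}_+\oplus\mathcal{E}_-$ where $\mathcal{E}_+,\mathcal{E}_-$ are abelian subalgebras. -/

import Mathlib

/-- An almost product structure with [x,y] = -[Ex,Ey] is a product structure
(an abelian product structure), and such a structure exists iff the Leibniz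
algebra decomposes as a direct sum of two abelian subalgebras. -/
theorem stmt11 {K E : Type*} [Field K] [CharZero K] [AddCommGroup E] [Module K E]
    (br : E →ₗ[K] E →ₗ[K] E)
    (hbr : ∀ x y z : E, br x (br y z) = br (br x y) z + br y (br x z)) :
    (∀ P : Module.End K E, P * P = 1 → (∀ x y : E, br x y = -br (P x) (P y)) →
      ∀ x y : E, P (br x y) = br (P x) y + br x (P y) - P (br (P x) (P y))) ∧
    ((∃ P : Module.End K E, P * P = 1 ∧ ∀ x y : E, br x y = -br (P x) (P y)) ↔
      ∃ p q : Submodule K E, IsCompl p q ∧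
        (∀ x ∈ p, ∀ y ∈ p, br x y = 0) ∧ (∀ x ∈ q, ∀ y ∈ q, br x y = 0)) := by
  have half : ∀ z : E, (2:K) • z = 0 → z = 0 := by
    intro z hz
    rcases smul_eq_zero.mp hz with h | h
    · exact absurd h two_ne_zero
    · exact h
  constructor
  · intro P hP2 hanti x y
    have h1 : ∀ z : E, P (P z) = z := fun z => by
      have := congrArg (fun f : Module.End K E => f z) hP2
      simpa [Module.End.mul_apply] using this
    have h2 : br (P x) y = - br x (P y) := by
      have := hanti (P x) y
      rwa [h1] at this
    have h3 : br (P x) (P y) = - br x y := by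
      have := hanti (P x) (P y)
      rwa [h1, h1] at this
    rw [h2, h3, map_neg]
    abel
  constructor
  · rintro ⟨P, hP2, hanti⟩
    have h1 : ∀ z : E, P (P z) = z := fun z => by
      have := congrArg (fun f : Module.End K E => f z) hP2
      simpa [Module.End.mul_apply] using this
    refine ⟨LinearMap.ker (P - 1), LinearMap.ker (P + 1), ⟨?_, ?_⟩, ?_, ?_⟩
    · rw [Submodule.disjoint_def]
      intro x hx hx'
      simp only [LinearMap.mem_ker, LinearMap.sub_apply, LinearMap.add_apply,
        Module.End.one_apply, sub_eq_zero, add_eq_zero_iff_eq_neg] at hx hx'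
      have hxx : x = -x := hx.symm.trans hx'
      apply half
      rw [two_smul]
      nth_rewrite 1 [hxx]
      abel
    · rw [codisjoint_iff, eq_top_iff]
      intro x _
      rw [Submodule.mem_sup]
      refine ⟨(2:K)⁻¹ • (x + P x), ?_, (2:K)⁻¹ • (x - P x), ?_, ?_⟩
      · rw [LinearMap.mem_ker, LinearMap.sub_apply, Module.End.one_apply, map_smul,
          map_add, h1, ← smul_sub, show P x + x - (x + P x) = (0:E) from by abel,
          smul_zero]
      · rw [LinearMap.mem_ker, LinearMap.add_apply, Module.End.one_apply, map_smul,
          map_sub, h1, ← smul_add, show P x - x + (x - P x) = (0:E) from by abel,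
          smul_zero]
      · rw [← smul_add]
        have : x + P x + (x - P x) = (2:K) • x := by rw [two_smul]; abel
        rw [this, smul_smul, inv_mul_cancel₀ (two_ne_zero), one_smul]
    · intro x hx y hy
      simp only [LinearMap.mem_ker, LinearMap.sub_apply, Module.End.one_apply,
        sub_eq_zero] at hx hy
      have := hanti x y
      rw [hx, hy] at this
      apply half
      rw [two_smul]
      nth_rewrite 1 [this]
      abel
    · intro x hx y hy
      simp only [LinearMap.mem_ker, LinearMap.add_apply, Module.End.one_apply,
        add_eq_zero_iff_eq_neg] at hx hy
      have := hanti x y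
      rw [hx, hy] at this
      simp only [map_neg, LinearMap.neg_apply, neg_neg] at this
      apply half
      rw [two_smul]
      nth_rewrite 1 [this]
      abel
  · rintro ⟨p, q, h, hp, hq⟩
    set π : E →ₗ[K] E := p.subtype.comp (p.projectionOnto q h) with hπ
    have hπp : ∀ a ∈ p, π a = a := fun a ha => by
      simp [hπ, Submodule.projectionOnto_apply_left h ⟨a, ha⟩]
    have hπq : ∀ b ∈ q, π b = 0 := fun b hb => by
      simp [hπ, Submodule.projectionOnto_apply_right h ⟨b, hb⟩]
    set P : Module.End K E := π + π - 1 with hP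
    have hdec : ∀ x : E, ∃ a ∈ p, ∃ b ∈ q, x = a + b := by
      intro x
      have hx : x ∈ p ⊔ q := by rw [h.sup_eq_top]; trivial
      rcases Submodule.mem_sup.mp hx with ⟨a, ha, b, hb, hab⟩
      exact ⟨a, ha, b, hb, hab.symm⟩
    have hPab : ∀ a ∈ p, ∀ b ∈ q, P (a + b) = a - b := by
      intro a ha b hb
      simp only [hP, LinearMap.sub_apply, LinearMap.add_apply, Module.End.one_apply,
        map_add, hπp a ha, hπq b hb]
      abel
    refine ⟨P, ?_, ?_⟩
    · ext x
      rcases hdec x with ⟨a, ha, b, hb, rfl⟩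
      have h1 : P (a + b) = a - b := hPab a ha b hb
      have h2 : a - b = a + (-b) := by abel
      have : P (a - b) = a + b := by
        rw [h2, hPab a ha (-b) (neg_mem hb)]
        abel
      simp [Module.End.mul_apply, h1, this]
    · intro x y
      rcases hdec x with ⟨a, ha, b, hb, rfl⟩
      rcases hdec y with ⟨c, hc, d, hd, rfl⟩
      rw [hPab a ha b hb, hPab c hc d hd]
      simp only [map_add, map_sub, LinearMap.add_apply, LinearMap.sub_apply,
        hp a ha c hc, hq b hb d hd]
      abel
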